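/- For any positive integer d, the unique positive real root w_d of z^{d+1} + z − 1 satisfies |w_d − (1 − log(d+1)/(d+1))| ≤ C·log(log(d+1)+2)/(d+1) for some absolute constant C and all d ≥ 1. -/

import Mathlib

lemma log_le_half {x : ℝ} (hx : 1 ≤ x) : Real.log x ≤ x / 2 := by
  have h0 : (0:ℝ) < x := by linarith
  have hs : Real.log (Real.sqrt x) ≤ Real.sqrt x - 1 :=
    Real.log_le_sub_one_of_pos (Real.sqrt_pos.mpr h0)
  have h2 : Real.log x = 2 * Real.log (Real.sqrt x) := by
    rw [Real.log_sqrt h0.le]; ring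
  have hsq : Real.sqrt x ^ 2 = x := Real.sq_sqrt h0.le
  nlinarith [sq_nonneg (Real.sqrt x - 2)]

lemma sq_log_le {x : ℝ} (hx : 1 ≤ x) : (Real.log x) ^ 2 ≤ 4 * x := by
  have h0 : (0:ℝ) < x := by linarith
  have hs : Real.log (Real.sqrt x) ≤ Real.sqrt x - 1 :=
    Real.log_le_sub_one_of_pos (Real.sqrt_pos.mpr h0)
  have h2 : Real.log x = 2 * Real.log (Real.sqrt x) := by
    rw [Real.log_sqrt h0.le]; ring
  have hsq : Real.sqrt x ^ 2 = x := Real.sq_sqrt h0.le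
  have hl0 : 0 ≤ Real.log x := Real.log_nonneg hx
  nlinarith [Real.sqrt_nonneg x]

lemma log_one_sub_ge {x : ℝ} (h0 : 0 ≤ x) (h1 : x ≤ 1/2) :
    -x - 2*x^2 ≤ Real.log (1 - x) := by
  have hpos : 0 < 1 - x := by linarith
  have h := Real.log_le_sub_one_of_pos (x := (1-x)⁻¹) (by positivity)
  rw [Real.log_inv] at h
  have key : (1-x)⁻¹ - 1 ≤ x + 2*x^2 := by
    rw [inv_eq_one_div, div_sub' hpos.ne', div_le_iff₀ hpos]
    nlinarith
  linarith

lemma root_le {n : ℕ} {w a : ℝ} (ha : 0 ≤ a) (hw : 0 ≤ w)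
    (hroot : w ^ n + w - 1 = 0) (hga : 0 ≤ a ^ n + a - 1) : w ≤ a := by
  by_contra h
  push_neg at h
  have hp : a ^ n ≤ w ^ n := pow_le_pow_left₀ ha h.le n
  linarith

lemma root_ge {n : ℕ} {w b : ℝ} (hw : 0 ≤ w)
    (hroot : w ^ n + w - 1 = 0) (hgb : b ^ n + b - 1 ≤ 0) : b ≤ w := by
  by_contra h
  push_neg at h
  have hp : w ^ n ≤ b ^ n := pow_le_pow_left₀ hw h.le n
  linarith

set_option maxHeartbeats 1000000 in
theorem wd_asymptotic :
    ∃ C : ℝ, 0 < C ∧ ∀ d : ℕ, 1 ≤ d → ∀ w : ℝ,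
      0 < w → w < 1 → w ^ (d + 1) + w - 1 = 0 →
      |w - (1 - Real.log (d + 1) / (d + 1))| ≤
        C * Real.log (Real.log (d + 1) + 2) / (d + 1) := by
  refine ⟨13, by norm_num, ?_⟩
  intro d hd w hw0 hw1 hroot
  have hd1 : (1:ℝ) ≤ (d:ℝ) := by exact_mod_cast hd
  set N : ℝ := (d:ℝ) + 1 with hNdef
  have hN2 : (2:ℝ) ≤ N := by rw [hNdef]; linarith
  have hcast : ((d+1:ℕ):ℝ) = N := by rw [hNdef]; push_cast; ring
  clear_value N
  have hN0 : (0:ℝ) < N := by linarith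
  have hlogN : 0 < Real.log N := Real.log_pos (by linarith)
  set L : ℝ := Real.log (Real.log N + 2) with hLdef
  have hL2 : Real.log 2 ≤ L := by
    rw [hLdef]; exact Real.log_le_log (by norm_num) (by linarith)
  have hLs : ∀ s : ℝ, 0 < s → s ≤ Real.log N → Real.log s ≤ L := by
    intro s h1 h2
    rw [hLdef]; exact Real.log_le_log h1 (by linarith)
  clear_value L
  have hlog2 : (0.6931471803:ℝ) < Real.log 2 := Real.log_two_gt_d9
  have hLpos : 0 < L := by linarith
  have hlogN_half : Real.log N ≤ N / 2 := log_le_half (by linarith)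
  have hsqlog : (Real.log N)^2 ≤ 4 * N := sq_log_le (by linarith)
  rw [abs_le]
  constructor
  · -- lower bound : 1 - (log N + 13 L)/N ≤ w
    have key : 1 - (Real.log N + 13*L)/N ≤ w := by
      set b := 1 - (Real.log N + 13*L)/N with hb
      clear_value b
      rcases le_or_gt b 0 with hble | hbpos
      · linarith
      · refine root_ge hw0.le hroot ?_
        have hbexp : b ≤ Real.exp (b - 1) := by
          have := Real.add_one_le_exp (b-1); linarith
        have hpow : b ^ (d+1) ≤ Real.exp (b-1) ^ (d+1) :=
          pow_le_pow_left₀ hbpos.le hbexp (d+1)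
        have hexp : Real.exp (b-1) ^ (d+1) = Real.exp (N * (b-1)) := by
          rw [← Real.exp_nat_mul, hcast]
        have hb1 : b - 1 = -((Real.log N + 13*L)/N) := by rw [hb]; ring
        have hNb : N * (b - 1) = -(Real.log N + 13*L) := by
          rw [hb1]; field_simp
        have hval : Real.exp (N*(b-1)) ≤ 1/N := by
          rw [hNb, neg_add, Real.exp_add, Real.exp_neg, Real.exp_log hN0]
          have h1 : Real.exp (-(13*L)) ≤ 1 := by
            rw [Real.exp_le_one_iff]; linarith
          calc N⁻¹ * Real.exp (-(13*L)) ≤ N⁻¹ * 1 :=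
                mul_le_mul_of_nonneg_left h1 (by positivity)
            _ = 1/N := by rw [mul_one, one_div]
        have hone : 1/N ≤ (Real.log N + 13*L)/N := by
          gcongr
          linarith
        linarith
    have hadd : (Real.log N + 13*L)/N = Real.log N/N + 13*L/N := add_div _ _ _
    linarith
  · -- upper bound : w ≤ 1 - log N / N + 13 L / N
    rcases le_or_gt (Real.log N) (13*L) with h | h
    · have hdiv : Real.log N / N ≤ 13*L/N := by gcongr
      linarith
    · set s := Real.log N - 13*L with hs
      have h13 : Real.log N - s = 13*L := by rw [hs]; ring
      clear_value s
      have hs0 : 0 < s := by linarith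
      have hslog : s ≤ Real.log N := by linarith
      have hsN : s ≤ N/2 := by linarith
      set a := 1 - s/N with ha
      have ha1 : a - 1 = -(s/N) := by rw [ha]; ring
      clear_value a
      have hx0 : (0:ℝ) ≤ s/N := by positivity
      have hx1 : s/N ≤ 1/2 := by rw [div_le_iff₀ hN0]; linarith
      have ha0 : 0 < a := by linarith
      have hloga : -(s/N) - 2*(s/N)^2 ≤ Real.log a := by
        have := log_one_sub_ge hx0 hx1
        have haa : a = 1 - s/N := by linarith
        rw [haa]; exact this
      have hpow : a ^ (d+1) = Real.exp (N * Real.log a) := by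
        rw [← hcast, ← Real.log_pow, Real.exp_log (pow_pos ha0 _)]
      have h1 : -s - 2*s^2/N ≤ N * Real.log a := by
        have hm := mul_le_mul_of_nonneg_left hloga hN0.le
        have heq : N * (-(s/N) - 2*(s/N)^2) = -s - 2*s^2/N := by
          field_simp
        linarith
      have hlogs : Real.log s ≤ L := hLs s hs0 hslog
      have h2s : 2*s^2/N ≤ 8 := by
        have hsq : s^2 ≤ 4*N := by nlinarith
        rw [div_le_iff₀ hN0]; linarith
      have hmain : Real.log (s/N) ≤ -s - 2*s^2/N := by
        rw [Real.log_div hs0.ne' hN0.ne']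
        have h12L : 8 ≤ 12 * L := by nlinarith
        linarith
      have hfinal : s/N ≤ a^(d+1) := by
        rw [hpow]
        calc s/N = Real.exp (Real.log (s/N)) := (Real.exp_log (by positivity)).symm
          _ ≤ Real.exp (N * Real.log a) := Real.exp_le_exp.mpr (le_trans hmain h1)
      have hwa : w ≤ a := root_le ha0.le hw0.le hroot (by linarith)
      have harith : Real.log N / N - 13*L/N = s/N := by
        rw [← h13, sub_div]; ring
      linarith
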